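/- Let J, E, E' be ideals of S = K[x_1,...,x_n] with a fixed monomial order such that (J,E) and (J,E') are Gröbner-nice pairs. If in(J∩E + J∩E') = in(J) ∩ in(E + E'), then J∩E + J∩E' = J ∩ (E + E') and (J, E+E') is a Gröbner-nice pair. -/

import Mathlib

open MvPolynomial

variable {K : Type*} [Field K] {n : ℕ}

/-- The leading monomial (exponent vector) of a polynomial with respect to a monomial
order `m`: the maximum of the support; by convention `lm m 0 = 0`. -/
noncomputable def lm (m : MonomialOrder (Fin n)) (f : MvPolynomial (Fin n) K) :
    Fin n →₀ ℕ :=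
  m.toSyn.symm (f.support.sup fun d => m.toSyn d)

/-- The initial ideal of `I`: the ideal generated by the leading monomials of the
nonzero elements of `I`. -/
noncomputable def initialIdeal (m : MonomialOrder (Fin n))
    (I : Ideal (MvPolynomial (Fin n) K)) : Ideal (MvPolynomial (Fin n) K) :=
  Ideal.span {p | ∃ f ∈ I, f ≠ 0 ∧ p = monomial (lm m f) (1 : K)}

/-- `G` is a Gröbner basis of `I`: a finite set of nonzero polynomials generating `I`
whose leading monomials generate the initial ideal of `I`. -/
def IsGroebnerBasis (m : MonomialOrder (Fin n)) (I : Ideal (MvPolynomial (Fin n) K))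
    (G : Set (MvPolynomial (Fin n) K)) : Prop :=
  G.Finite ∧ (0 : MvPolynomial (Fin n) K) ∉ G ∧ Ideal.span G = I ∧
    Ideal.span ((fun g => monomial (lm m g) (1 : K)) '' G) = initialIdeal m I

/-- The S-polynomial `S(f,g)` with respect to the monomial order `m`. -/
noncomputable def sPoly (m : MonomialOrder (Fin n)) (f g : MvPolynomial (Fin n) K) :
    MvPolynomial (Fin n) K :=
  monomial (lm m f ⊔ lm m g - lm m f) (f.coeff (lm m f))⁻¹ * f -
    monomial (lm m f ⊔ lm m g - lm m g) (g.coeff (lm m g))⁻¹ * g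

/-- An ideal is a monomial ideal if it is generated by monomials. -/
def IsMonomialIdeal (I : Ideal (MvPolynomial (Fin n) K)) : Prop :=
  ∃ M : Set (Fin n →₀ ℕ), I = Ideal.span ((fun μ => (monomial μ (1 : K))) '' M)

section Aux
variable (m : MonomialOrder (Fin n))

lemma toSyn_lm (f : MvPolynomial (Fin n) K) :
    m.toSyn (lm m f) = f.support.sup fun d => m.toSyn d := by
  simp [lm]

lemma lm_mem_support {f : MvPolynomial (Fin n) K} (hf : f ≠ 0) : lm m f ∈ f.support := by
  obtain ⟨d, hd, hsup⟩ := Finset.exists_mem_eq_sup f.support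
    (MvPolynomial.support_nonempty.mpr hf) (fun d => m.toSyn d)
  have : lm m f = d := by rw [lm, hsup, AddEquiv.symm_apply_apply]
  rwa [this]

lemma le_lm {f : MvPolynomial (Fin n) K} {d : Fin n →₀ ℕ} (hd : d ∈ f.support) :
    m.toSyn d ≤ m.toSyn (lm m f) := by
  rw [toSyn_lm]; exact Finset.le_sup hd

lemma coeff_eq_zero_of_lm_lt {f : MvPolynomial (Fin n) K} {d : Fin n →₀ ℕ}
    (h : m.toSyn (lm m f) < m.toSyn d) : f.coeff d = 0 := by
  by_contra hc
  exact absurd (le_lm m (MvPolynomial.mem_support_iff.mpr hc)) h.not_ge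

lemma lm_add_le (p q : MvPolynomial (Fin n) K) :
    m.toSyn (lm m (p + q)) ≤ max (m.toSyn (lm m p)) (m.toSyn (lm m q)) := by
  rw [toSyn_lm]
  apply Finset.sup_le
  intro e he
  rcases Finset.mem_union.mp (MvPolynomial.support_add he) with h | h
  · exact le_max_of_le_left (le_lm m h)
  · exact le_max_of_le_right (le_lm m h)

lemma lm_neg (p : MvPolynomial (Fin n) K) : lm m (-p) = lm m p := by
  simp [lm, MvPolynomial.support_neg]

lemma initialIdeal_mono {I I' : Ideal (MvPolynomial (Fin n) K)} (hII : I ≤ I') :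
    initialIdeal m I ≤ initialIdeal m I' := by
  apply Ideal.span_mono
  rintro p ⟨f, hf, h0, rfl⟩
  exact ⟨f, hII hf, h0, rfl⟩

lemma lm_monomial_mem {I : Ideal (MvPolynomial (Fin n) K)} {f : MvPolynomial (Fin n) K}
    (hf : f ∈ I) (h0 : f ≠ 0) : monomial (lm m f) (1 : K) ∈ initialIdeal m I :=
  Ideal.subset_span ⟨f, hf, h0, rfl⟩

lemma exists_divisor {I : Ideal (MvPolynomial (Fin n) K)} {d : Fin n →₀ ℕ}
    (hd : (monomial d (1 : K)) ∈ initialIdeal m I) :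
    ∃ g ∈ I, g ≠ 0 ∧ lm m g ≤ d := by
  have heq : initialIdeal m I =
      Ideal.span ((fun μ => monomial μ (1 : K)) '' {μ | ∃ f ∈ I, f ≠ 0 ∧ lm m f = μ}) := by
    unfold initialIdeal
    congr 1
    ext p
    constructor
    · rintro ⟨f, hf, h0, rfl⟩
      exact ⟨lm m f, ⟨f, hf, h0, rfl⟩, rfl⟩
    · rintro ⟨μ, ⟨f, hf, h0, rfl⟩, rfl⟩
      exact ⟨f, hf, h0, rfl⟩
  rw [heq, mem_ideal_span_monomial_image] at hd
  obtain ⟨si, ⟨g, hgI, hg0, rfl⟩, hle⟩ := hd d (by simp [support_monomial])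
  exact ⟨g, hgI, hg0, hle⟩

lemma reduction {g : MvPolynomial (Fin n) K} (hg0 : g ≠ 0) {d : Fin n →₀ ℕ}
    (hle : lm m g ≤ d) (c : K) :
    ∃ t : MvPolynomial (Fin n) K,
      (∀ I : Ideal (MvPolynomial (Fin n) K), g ∈ I → t ∈ I) ∧ t.coeff d = c ∧
      ∀ e, m.toSyn d < m.toSyn e → t.coeff e = 0 := by
  set s := d - lm m g with hs
  refine ⟨monomial s (c * (g.coeff (lm m g))⁻¹) * g, fun I hI => Ideal.mul_mem_left I _ hI,
    ?_, ?_⟩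
  · rw [coeff_monomial_mul', if_pos (tsub_le_self)]
    have : d - s = lm m g := by
      rw [hs]; exact tsub_tsub_cancel_of_le hle
    rw [this, mul_assoc, inv_mul_cancel₀ (MvPolynomial.mem_support_iff.mp (lm_mem_support m hg0)),
      mul_one]
  · intro e hde
    rw [coeff_monomial_mul']
    split_ifs with hse
    · have hz : g.coeff (e - s) = 0 := by
        apply coeff_eq_zero_of_lm_lt
        by_contra hcon
        push_neg at hcon
        have h1 : s + lm m g = d := by rw [hs]; exact tsub_add_cancel_of_le hle
        have h2 : s + (e - s) = e := add_tsub_cancel_of_le hse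
        have : m.toSyn e ≤ m.toSyn d := by
          rw [← h1, ← h2, map_add, map_add]
          exact add_le_add (le_refl _) hcon
        exact absurd this hde.not_ge
      rw [hz, mul_zero]
    · rfl

lemma lm_sub_lt {f t : MvPolynomial (Fin n) K} (hf : f ≠ 0)
    (hc : t.coeff (lm m f) = f.coeff (lm m f))
    (hh : ∀ e, m.toSyn (lm m f) < m.toSyn e → t.coeff e = 0)
    (hne : f - t ≠ 0) :
    m.toSyn (lm m (f - t)) < m.toSyn (lm m f) := by
  have key : ∀ e ∈ (f - t).support, m.toSyn e < m.toSyn (lm m f) := by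
    intro e he
    rcases lt_trichotomy (m.toSyn e) (m.toSyn (lm m f)) with hlt | heq | hgt
    · exact hlt
    · exfalso
      have : e = lm m f := m.toSyn.injective heq
      subst this
      rw [MvPolynomial.mem_support_iff, MvPolynomial.coeff_sub, hc, sub_self] at he
      exact he rfl
    · exfalso
      rw [MvPolynomial.mem_support_iff, MvPolynomial.coeff_sub,
        coeff_eq_zero_of_lm_lt m hgt, hh e hgt, sub_self] at he
      exact he rfl
  exact key _ (lm_mem_support m hne)

lemma le_of_initial_le {A B : Ideal (MvPolynomial (Fin n) K)} (hAB : A ≤ B)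
    (hin : initialIdeal m B ≤ initialIdeal m A) : B ≤ A := by
  have main : ∀ μ : m.syn, ∀ f ∈ B, m.toSyn (lm m f) ≤ μ → f ∈ A := by
    intro μ
    induction μ using WellFoundedLT.induction with
    | ind μ IH =>
      intro f hfB hflm
      by_cases hf0 : f = 0
      · simpa [hf0] using A.zero_mem
      obtain ⟨g, hgA, hg0, hgle⟩ := exists_divisor m (hin (lm_monomial_mem m hfB hf0))
      obtain ⟨t, htmem, htc, hth⟩ := reduction m hg0 hgle (f.coeff (lm m f))
      have htA : t ∈ A := htmem A hgA
      by_cases hft : f - t = 0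
      · rwa [sub_eq_zero.mp hft]
      · have hlt : m.toSyn (lm m (f - t)) < m.toSyn (lm m f) :=
          lm_sub_lt m hf0 htc hth hft
        have : f - t ∈ A :=
          IH _ (lt_of_lt_of_le hlt hflm) (f - t) (B.sub_mem hfB (hAB htA)) le_rfl
        have := A.add_mem this htA
        rwa [sub_add_cancel] at this
  exact fun f hf => main _ f hf le_rfl

end Aux


section Main
variable (m : MonomialOrder (Fin n))

lemma initial_sup_le (J F C : Ideal (MvPolynomial (Fin n) K))
    (hCJ : C ≤ J) (hCF : C ≤ F)
    (hcap : initialIdeal m J ⊓ initialIdeal m F ≤ initialIdeal m C) :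
    initialIdeal m (J + F) ≤ initialIdeal m J + initialIdeal m F := by
  have claim : ∀ μ : m.syn, ∀ a ∈ J, ∀ b ∈ F,
      m.toSyn (lm m a) ≤ μ → m.toSyn (lm m b) ≤ μ → a + b ≠ 0 →
      monomial (lm m (a + b)) (1 : K) ∈ initialIdeal m J + initialIdeal m F := by
    intro μ
    induction μ using WellFoundedLT.induction with
    | ind μ IH =>
      intro a haJ b hbF haμ hbμ hab0
      by_cases ha0 : a = 0
      · subst ha0
        rw [zero_add] at hab0 ⊢
        exact Submodule.mem_sup_right (lm_monomial_mem m hbF hab0)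
      by_cases hb0 : b = 0
      · subst hb0
        rw [add_zero] at hab0 ⊢
        exact Submodule.mem_sup_left (lm_monomial_mem m haJ hab0)
      by_cases hfa : lm m (a + b) = lm m a
      · rw [hfa]; exact Submodule.mem_sup_left (lm_monomial_mem m haJ ha0)
      by_cases hfb : lm m (a + b) = lm m b
      · rw [hfb]; exact Submodule.mem_sup_right (lm_monomial_mem m hbF hb0)
      -- now the leading terms must cancel
      have hmax := lm_add_le m a b
      have hab : lm m a = lm m b := by
        rcases lt_trichotomy (m.toSyn (lm m a)) (m.toSyn (lm m b)) with hlt | heq | hgt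
        · exfalso
          apply hfb
          apply m.toSyn.injective
          apply le_antisymm (le_trans hmax (max_le hlt.le le_rfl))
          apply le_lm
          rw [MvPolynomial.mem_support_iff, MvPolynomial.coeff_add,
            coeff_eq_zero_of_lm_lt m hlt, zero_add]
          exact MvPolynomial.mem_support_iff.mp (lm_mem_support m hb0)
        · exact m.toSyn.injective heq
        · exfalso
          apply hfa
          apply m.toSyn.injective
          apply le_antisymm (le_trans hmax (max_le le_rfl hgt.le))
          apply le_lm
          rw [MvPolynomial.mem_support_iff, MvPolynomial.coeff_add,
            coeff_eq_zero_of_lm_lt m hgt, add_zero]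
          exact MvPolynomial.mem_support_iff.mp (lm_mem_support m ha0)
      have hflt : m.toSyn (lm m (a + b)) < m.toSyn (lm m a) := by
        rcases lt_or_eq_of_le (le_trans hmax (by rw [hab, max_self])) with hlt | heq
        · rwa [← hab] at hlt
        · exact absurd (m.toSyn.injective (by rw [← hab] at heq; exact heq)) hfa
      -- lm a = lm b is in in(J) ⊓ in(F) ≤ in(C)
      have hmem : monomial (lm m a) (1 : K) ∈ initialIdeal m C := by
        apply hcap
        exact ⟨lm_monomial_mem m haJ ha0, by rw [hab]; exact lm_monomial_mem m hbF hb0⟩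
      obtain ⟨g, hgC, hg0, hgle⟩ := exists_divisor m hmem
      obtain ⟨t, htmem, htc, hth⟩ := reduction m hg0 hgle (a.coeff (lm m a))
      set a' := a - t with ha'
      set b' := b + t with hb'
      have hsum : a' + b' = a + b := by ring
      have ha'J : a' ∈ J := J.sub_mem haJ (htmem J (hCJ hgC))
      have hb'F : b' ∈ F := F.add_mem hbF (htmem F (hCF hgC))
      have hνpos : (0 : m.syn) < m.toSyn (lm m a) :=
        lt_of_le_of_lt (by rw [← m.bot_eq_zero]; exact bot_le) hflt
      have ha'lt : m.toSyn (lm m a') < m.toSyn (lm m a) := by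
        by_cases ha'0 : a' = 0
        · rw [ha'0]; simpa [lm, MvPolynomial.support_zero] using hνpos
        · exact lm_sub_lt m ha0 htc hth ha'0
      have hb'lt : m.toSyn (lm m b') < m.toSyn (lm m a) := by
        have : b' = (a + b) + (-a') := by rw [← hsum]; ring
        calc m.toSyn (lm m b') ≤ max (m.toSyn (lm m (a + b))) (m.toSyn (lm m (-a'))) := by
              rw [this]; exact lm_add_le m _ _
          _ < m.toSyn (lm m a) := by
              rw [lm_neg]; exact max_lt hflt ha'lt
      have hμ' : max (m.toSyn (lm m a')) (m.toSyn (lm m b')) < μ :=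
        lt_of_lt_of_le (max_lt ha'lt hb'lt) haμ
      have := IH _ hμ' a' ha'J b' hb'F (le_max_left _ _) (le_max_right _ _)
        (by rw [hsum]; exact hab0)
      rwa [hsum] at this
  -- conclude by span_le
  rw [initialIdeal, Ideal.span_le]
  rintro p ⟨f, hf, hf0, rfl⟩
  obtain ⟨a, haJ, b, hbF, rfl⟩ := Submodule.mem_sup.mp hf
  exact claim _ a haJ b hbF (le_max_left _ _) (le_max_right _ _) hf0

end Main

/-- If `(J,E)` and `(J,E')` are Gröbner-nice pairs and
`in(J∩E + J∩E') = in(J) ∩ in(E + E')`, then `J∩E + J∩E' = J ∩ (E + E')` and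
`(J, E+E')` is a Gröbner-nice pair. -/
theorem stmt11 (m : MonomialOrder (Fin n)) (J E E' : Ideal (MvPolynomial (Fin n) K))
    (hE : initialIdeal m (J + E) = initialIdeal m J + initialIdeal m E)
    (hE' : initialIdeal m (J + E') = initialIdeal m J + initialIdeal m E')
    (h : initialIdeal m (J ⊓ E + J ⊓ E') =
      initialIdeal m J ⊓ initialIdeal m (E + E')) :
    J ⊓ E + J ⊓ E' = J ⊓ (E + E') ∧
      initialIdeal m (J + (E + E')) = initialIdeal m J + initialIdeal m (E + E') := by
  simp only [Submodule.add_eq_sup] at h ⊢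
  have hAB : J ⊓ E ⊔ J ⊓ E' ≤ J ⊓ (E ⊔ E') :=
    sup_le (le_inf inf_le_left (le_trans inf_le_right le_sup_left))
      (le_inf inf_le_left (le_trans inf_le_right le_sup_right))
  have hCJ : J ⊓ E ⊔ J ⊓ E' ≤ J := sup_le inf_le_left inf_le_left
  have hCF : J ⊓ E ⊔ J ⊓ E' ≤ E ⊔ E' :=
    sup_le (le_trans inf_le_right le_sup_left) (le_trans inf_le_right le_sup_right)
  constructor
  · apply le_antisymm hAB
    apply le_of_initial_le m hAB
    rw [h]
    exact le_inf (initialIdeal_mono m inf_le_left) (initialIdeal_mono m inf_le_right)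
  · apply le_antisymm
    · have := initial_sup_le m J (E + E') (J ⊓ E + J ⊓ E') hCJ hCF (le_of_eq h.symm)
      simpa [Submodule.add_eq_sup] using this
    · exact sup_le (initialIdeal_mono m le_sup_left) (initialIdeal_mono m le_sup_right)
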